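/- arXiv:1701.01580 — 2 statements merged into one kernel-verified Lean document; each statement's English description precedes it below -/
import Mathlib

section
/- A binary word s over {a,b} is not balanced if and only if there exists a palindrome v such that both ava and bvb are factors of s. -/
open scoped Classical

variable {α : Type*}

def IsBorder (u w : List α) : Prop := u <+: w ∧ u <:+ w ∧ u ≠ w

def InternalOcc (u w : List α) : Prop := ∃ p s : List α, p ≠ [] ∧ s ≠ [] ∧ w = p ++ u ++ s

def ClosedWord (w : List α) : Prop := w = [] ∨ ∃ u, IsBorder u w ∧ ¬ InternalOcc u w

noncomputable def minPer (w : List α) : ℕ :=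
  if w = [] then 1 else sInf {p | ∃ v, IsBorder v w ∧ p = w.length - v.length}

noncomputable def ocL (w : List α) : List ℕ :=
  (List.range w.length).map fun i => if ClosedWord (w.take (i+1)) then 1 else 0

def prefW (w : ℕ → α) (n : ℕ) : List α := (List.range n).map w

noncomputable def ocI (w : ℕ → α) : ℕ → ℕ := fun n =>
  if ClosedWord (prefW w (n+1)) then 1 else 0

def InfixAt (w : ℕ → α) (u : List α) (i : ℕ) : Prop :=
  u = (List.range u.length).map fun j => w (i + j)

def RecurrentWord (w : ℕ → α) : Prop :=
  ∀ u : List α, (∃ i, InfixAt w u i) → ∀ N, ∃ i, N ≤ i ∧ InfixAt w u i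

def UltPeriodic (s : ℕ → α) : Prop := ∃ p, 0 < p ∧ ∃ N, ∀ n, N ≤ n → s (n + p) = s n

def PerWord (s : ℕ → α) : Prop := ∃ p, 0 < p ∧ ∀ n, s (n + p) = s n

def OccurrenceAt (u w : List α) (i : ℕ) : Prop := i + u.length ≤ w.length ∧ u <+: w.drop i

def RepeatedIn (u w : List α) : Prop := ∃ i j, i < j ∧ OccurrenceAt u w i ∧ OccurrenceAt u w j

def CompleteReturnTo (w u : List α) : Prop :=
  u <+: w ∧ u <:+ w ∧ u ≠ w ∧ ∀ i, OccurrenceAt u w i → i = 0 ∨ i = w.length - u.length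

def BalancedWord (w : List Bool) : Prop :=
  ∀ u v : List Bool, u <:+: w → v <:+: w → u.length = v.length →
    ((u.count true : ℤ) - v.count true).natAbs ≤ 1

def RightSpecialSturmian (w : List Bool) : Prop := ∀ x : Bool, BalancedWord (w ++ [x])

def stdSeq (d : ℕ → ℕ) : ℕ → List Bool
  | 0 => [true]
  | 1 => [false]
  | n+2 => (List.replicate (d n) (stdSeq d (n+1))).flatten ++ stdSeq d n

def stdInf (d : ℕ → ℕ) : ℕ → Bool := fun i => (stdSeq d (i+2)).getD i false

def IsStandardWord (s : List Bool) : Prop :=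
  ∃ d : ℕ → ℕ, (∀ n, 1 ≤ n → 1 ≤ d n) ∧ ∃ m, s = stdSeq d m

def IsCentral (u : List Bool) : Prop := ∃ x y : Bool, x ≠ y ∧ IsStandardWord (u ++ [x, y])

def LeftSpecial (u w : List Bool) : Prop := (false :: u) <:+: w ∧ (true :: u) <:+: w

def RightSpecial (u w : List Bool) : Prop := (u ++ [false]) <:+: w ∧ (u ++ [true]) <:+: w

def IsSemicentral (v : List Bool) : Prop :=
  ∃ u : List Bool,
    (u <+: v ∧ RepeatedIn u v ∧ ∀ z, z <+: v → RepeatedIn z v → z.length ≤ u.length) ∧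
    (u <:+ v ∧ RepeatedIn u v ∧ ∀ z, z <:+ v → RepeatedIn z v → z.length ≤ u.length) ∧
    (LeftSpecial u v ∧ ∀ z, LeftSpecial z v → z.length ≤ u.length ∧ (z.length = u.length → z = u)) ∧
    (RightSpecial u v ∧ ∀ z, RightSpecial z v → z.length ≤ u.length ∧ (z.length = u.length → z = u))

def contFront : List ℕ → ℕ
  | [] => 1
  | [x] => x
  | x :: y :: l => x * contFront (y :: l) + contFront l

def paperK (l : List ℕ) : ℕ := contFront l.reverse

noncomputable def lbl (u : List α) : ℕ := sSup {n | ∃ v, IsBorder v u ∧ v.length = n}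

noncomputable def Bp (w : List α) (i : ℕ) : ℕ :=
  (Finset.range (i+1)).sup fun j => lbl (w.take j)


private lemma cntBoth (a c : Bool) (l : List Bool) :
    (a :: (l ++ [c])).count true = a.toNat + l.count true + c.toNat := by
  cases a <;> cases c <;> simp [List.count_append, List.count_cons] <;> omega

private lemma cntRight (c : Bool) (l : List Bool) :
    (l ++ [c]).count true = l.count true + c.toNat := by
  cases c <;> simp [List.count_append, List.count_cons]

private lemma cntLeft (a : Bool) (l : List Bool) :
    (a :: l).count true = a.toNat + l.count true := by
  cases a <;> simp [List.count_cons] <;> omega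

private lemma firstDiff : ∀ (x y : List Bool), x.length = y.length → x ≠ y →
    ∃ p a b x₂ y₂, a ≠ b ∧ x = p ++ a :: x₂ ∧ y = p ++ b :: y₂ ∧ x₂.length = y₂.length := by
  intro x
  induction x with
  | nil =>
    intro y hl hne
    cases y with
    | nil => exact absurd rfl hne
    | cons d t => simp at hl
  | cons c x ih =>
    intro y hl hne
    cases y with
    | nil => simp at hl
    | cons d y =>
      by_cases hcd : c = d
      · subst hcd
        have hx : x ≠ y := fun h => hne (by rw [h])
        obtain ⟨p, a, b, x₂, y₂, hab, hx1, hy1, hl2⟩ := ih y (by simpa using hl) hx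
        exact ⟨c :: p, a, b, x₂, y₂, hab, by simp [hx1], by simp [hy1], hl2⟩
      · exact ⟨[], c, d, x, y, hcd, rfl, rfl, by simpa using hl⟩

private lemma notPalin {x : List Bool} (h : x.reverse ≠ x) :
    ∃ p a b mid, a ≠ b ∧ x = p ++ [a] ++ mid ++ [b] ++ p.reverse := by
  obtain ⟨p, a, b, x₂, y₂, hab, hx, hr, hlen⟩ :=
    firstDiff x x.reverse (by simp) (fun h' => h h'.symm)
  have hx2 : x = y₂.reverse ++ [b] ++ p.reverse := by
    have := congrArg List.reverse hr
    simpa using this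
  rcases lt_trichotomy p.length y₂.length with hlt | heq | hgt
  · have h1 : (p ++ [a]) <+: x := ⟨x₂, by simp [hx]⟩
    have h2 : y₂.reverse <+: x := ⟨[b] ++ p.reverse, by simp [hx2]⟩
    have h3 : (p ++ [a]) <+: y₂.reverse :=
      List.prefix_of_prefix_length_le h1 h2 (by simp; try omega)
    obtain ⟨mid, hmid⟩ := h3
    exact ⟨p, a, b, mid, hab, by rw [hx2, ← hmid]; try simp⟩
  · have h1 : p <+: x := ⟨a :: x₂, by simp [hx]⟩
    have h2 : y₂.reverse <+: x := ⟨[b] ++ p.reverse, by simp [hx2]⟩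
    have hpe : p = y₂.reverse :=
      (List.prefix_of_prefix_length_le h1 h2 (by simp [heq])).eq_of_length (by simp [heq])
    have hcan : (a :: x₂ : List Bool) = [b] ++ p.reverse := by
      apply List.append_cancel_left (as := y₂.reverse)
      rw [← hpe, ← hx]
      rw [hx2, hpe]
      simp [List.append_assoc]
    exact absurd (by simpa using congrArg (·.headI) hcan) hab
  · have h1 : (y₂.reverse ++ [b]) <+: x := ⟨p.reverse, by simp [hx2]⟩
    have h2 : p <+: x := ⟨a :: x₂, by simp [hx]⟩
    have h3 : (y₂.reverse ++ [b]) <+: p :=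
      List.prefix_of_prefix_length_le h1 h2 (by simp; omega)
    obtain ⟨t, ht⟩ := h3
    have hpr : p.reverse = t.reverse ++ [b] ++ y₂ := by
      rw [← ht]; simp
    have hcan : t ++ a :: x₂ = t.reverse ++ ([b] ++ y₂) := by
      apply List.append_cancel_left (as := y₂.reverse ++ [b])
      have e1 : y₂.reverse ++ [b] ++ (t ++ a :: x₂) = x := by
        rw [hx, ← ht]; simp [List.append_assoc]
      have e2 : y₂.reverse ++ [b] ++ (t.reverse ++ ([b] ++ y₂)) = x := by
        rw [hx2, hpr]; simp [List.append_assoc]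
      rw [e1, e2]
    obtain ⟨h4, h5⟩ := List.append_inj hcan (by simp)
    exact absurd (by simpa using congrArg (·.headI) h5) hab

theorem stmt13' (s : List Bool) :
    ¬ (∀ u v : List Bool, u <:+: s → v <:+: s → u.length = v.length →
      ((u.count true : ℤ) - v.count true).natAbs ≤ 1) ↔
      ∃ v : List Bool, v.reverse = v ∧
        ([false] ++ v ++ [false]) <:+: s ∧ ([true] ++ v ++ [true]) <:+: s := by
  constructor
  · intro hnb
    have hex : ∃ n : ℕ, ∃ u v : List Bool, u <:+: s ∧ v <:+: s ∧
        u.length = n ∧ v.length = n ∧ (v.count true : ℤ) + 2 ≤ u.count true := by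
      push_neg at hnb
      obtain ⟨u, v, hu, hv, hl, hcnt⟩ := hnb
      rcases le_or_gt ((v.count true : ℤ) + 2) (u.count true) with h | h
      · exact ⟨u.length, u, v, hu, hv, rfl, hl.symm, h⟩
      · exact ⟨u.length, v, u, hv, hu, hl.symm, rfl, by omega⟩
    classical
    obtain ⟨u, v, hu, hv, hlu, hlv, hcnt⟩ := Nat.find_spec hex
    set n := Nat.find hex with hn
    have Hmin : ∀ u' v' : List Bool, u' <:+: s → v' <:+: s →
        u'.length = v'.length → u'.length < n →
        ((u'.count true : ℤ) - v'.count true).natAbs ≤ 1 := by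
      intro u' v' hu' hv' hl' hlt
      by_contra hcon
      have h2 : (v'.count true : ℤ) + 2 ≤ u'.count true ∨
          (u'.count true : ℤ) + 2 ≤ v'.count true := by omega
      rcases h2 with h2 | h2
      · exact Nat.find_min hex hlt ⟨u', v', hu', hv', rfl, hl'.symm, h2⟩
      · exact Nat.find_min hex hlt ⟨v', u', hv', hu', hl'.symm, rfl, h2⟩
    have h2n : 2 ≤ n := by
      have hc1 : u.count true ≤ u.length := List.count_le_length
      omega
    have hdec : ∀ w : List Bool, w.length = n → ∃ a c m, w = a :: (m ++ [c]) := by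
      intro w hw
      cases w with
      | nil => simp at hw; omega
      | cons a t =>
        rcases t.eq_nil_or_concat with rfl | ⟨m, c, rfl⟩
        · simp at hw; omega
        · exact ⟨a, c, m, by simp⟩
    obtain ⟨a, c, xu, rfl⟩ := hdec u hlu
    obtain ⟨b, d, xv, rfl⟩ := hdec v hlv
    simp only [List.length_cons, List.length_append, List.length_singleton] at hlu hlv
    have tail_u : (xu ++ [c]) <:+: s := (List.suffix_cons a _).isInfix.trans hu
    have tail_v : (xv ++ [d]) <:+: s := (List.suffix_cons b _).isInfix.trans hv
    have init_u : (a :: xu) <:+: s :=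
      (List.IsPrefix.isInfix ⟨[c], by simp⟩).trans hu
    have init_v : (b :: xv) <:+: s :=
      (List.IsPrefix.isInfix ⟨[d], by simp⟩).trans hv
    have mid_u : xu <:+: s := List.IsInfix.trans ⟨[a], [c], by simp⟩ hu
    have mid_v : xv <:+: s := List.IsInfix.trans ⟨[b], [d], by simp⟩ hv
    have h1 := Hmin _ _ tail_u tail_v (by simp; omega) (by simp; omega)
    have h2 := Hmin _ _ init_u init_v (by simp; omega) (by simp; omega)
    have h3 := Hmin _ _ mid_u mid_v (by omega) (by omega)
    rw [cntRight] at h1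
    rw [cntRight] at h1
    rw [cntLeft, cntLeft] at h2
    rw [cntBoth, cntBoth] at hcnt
    have ta := Bool.toNat_lt a
    have tb := Bool.toNat_lt b
    have tc := Bool.toNat_lt c
    have td := Bool.toNat_lt d
    have ha : a = true := by
      have : a.toNat = 1 := by omega
      simpa using this
    have hb : b = false := by
      have : b.toNat = 0 := by omega
      simpa using this
    have hcB : c = true := by
      have : c.toNat = 1 := by omega
      simpa using this
    have hd : d = false := by
      have : d.toNat = 0 := by omega
      simpa using this
    subst ha hb hcB hd
    have hcc : xu.count true = xv.count true := by omega
    clear h1 h2 h3 hcnt ta tb tc td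
    have hxy : xu = xv := by
      by_contra hne
      obtain ⟨p, a', b', x₂, y₂, hab, hx1, hy1, hl2⟩ := firstDiff xu xv (by omega) hne
      have hL := congrArg List.length hx1
      simp at hL
      cases a' <;> cases b'
      · exact hab rfl
      · -- a' = false, b' = true : take suffixes
        have su : (x₂ ++ [true]) <:+: s := by
          refine (List.IsSuffix.isInfix ?_).trans hu
          exact ⟨true :: p ++ [false], by simp [hx1]⟩
        have sv : (y₂ ++ [false]) <:+: s := by
          refine (List.IsSuffix.isInfix ?_).trans hv
          exact ⟨false :: p ++ [true], by simp [hy1]⟩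
        have hm := Hmin _ _ su sv (by simp [hl2]) (by simp; omega)
        rw [hx1, hy1] at hcc
        simp [List.count_append, List.count_cons] at hm hcc
        omega
      · -- a' = true, b' = false : take prefixes
        have pu : (true :: p ++ [true]) <:+: s := by
          refine (List.IsPrefix.isInfix ?_).trans hu
          exact ⟨x₂ ++ [true], by simp [hx1]⟩
        have pv : (false :: p ++ [false]) <:+: s := by
          refine (List.IsPrefix.isInfix ?_).trans hv
          exact ⟨y₂ ++ [false], by simp [hy1]⟩
        have hm := Hmin _ _ pu pv (by simp) (by simp; omega)
        simp [List.count_append, List.count_cons] at hm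
        omega
      · exact hab rfl
    subst hxy
    have hpal : xu.reverse = xu := by
      by_contra hnp
      obtain ⟨p, a', b', mid, hab, hxd⟩ := notPalin hnp
      have hL := congrArg List.length hxd
      simp at hL
      cases a' <;> cases b'
      · exact hab rfl
      · -- a' = false, b' = true
        have pv : (false :: p ++ [false]) <:+: s := by
          refine (List.IsPrefix.isInfix ?_).trans hv
          exact ⟨mid ++ [true] ++ p.reverse ++ [false], by simp [hxd]⟩
        have su : (true :: p.reverse ++ [true]) <:+: s := by
          refine (List.IsSuffix.isInfix ?_).trans hu
          exact ⟨true :: p ++ [false] ++ mid, by simp [hxd]⟩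
        have hm := Hmin _ _ su pv (by simp) (by simp; omega)
        simp [List.count_append, List.count_cons, List.count_reverse] at hm
        omega
      · -- a' = true, b' = false
        have pu : (true :: p ++ [true]) <:+: s := by
          refine (List.IsPrefix.isInfix ?_).trans hu
          exact ⟨mid ++ [false] ++ p.reverse ++ [true], by simp [hxd]⟩
        have sv : (false :: p.reverse ++ [false]) <:+: s := by
          refine (List.IsSuffix.isInfix ?_).trans hv
          exact ⟨false :: p ++ [true] ++ mid, by simp [hxd]⟩
        have hm := Hmin _ _ pu sv (by simp) (by simp; omega)
        simp [List.count_append, List.count_cons, List.count_reverse] at hm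
        omega
      · exact hab rfl
    exact ⟨xu, hpal, by simpa using hv, by simpa using hu⟩
  · rintro ⟨v, hpal, h0, h1⟩ hb
    have := hb _ _ h1 h0 (by simp)
    simp [List.count_append, List.count_cons] at this
    omega

theorem stmt13 (s : List Bool) :
    ¬ BalancedWord s ↔
      ∃ v : List Bool, v.reverse = v ∧
        ([false] ++ v ++ [false]) <:+: s ∧ ([true] ++ v ++ [true]) <:+: s := stmt13' s
end

section
/- Every central word is closed. More precisely, a central word v that is not a power of a single letter can be written as v = p x y q = q y x p for central words p, q and distinct letters x, y, and v is a complete return to the longer of p and q. -/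
open scoped Classical

variable {α : Type*}

section FW

def HasPer (f : ℕ → Bool) (n p : ℕ) : Prop := ∀ j, j + p < n → f (j + p) = f j

lemma mod_add_right_of_dvd (x p g : ℕ) (h : g ∣ p) : (x + p) % g = x % g := by
  obtain ⟨k, rfl⟩ := h
  rw [Nat.add_mul_mod_self_left]

lemma per_mod {f : ℕ → Bool} {n p : ℕ} (hp : 0 < p) (h : HasPer f n p) :
    ∀ j, j < n → f j = f (j % p) := by
  intro j
  induction j using Nat.strong_induction_on with
  | _ j IH =>
    intro hj
    rcases lt_or_ge j p with h' | h'
    · rw [Nat.mod_eq_of_lt h']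
    · have e : j - p + p = j := Nat.sub_add_cancel h'
      have h1 := h (j - p) (by omega)
      rw [e] at h1
      rw [h1, IH (j - p) (by omega) (by omega)]
      congr 1
      conv_rhs => rw [← e]
      rw [mod_add_right_of_dvd _ _ _ dvd_rfl]

lemma fw : ∀ (N p q n : ℕ) (f : ℕ → Bool), p + q ≤ N → 0 < p → 0 < q →
    p + q - Nat.gcd p q ≤ n → HasPer f n p → HasPer f n q →
    ∀ j, j < n → f j = f (j % Nat.gcd p q) := by
  intro N
  induction N with
  | zero => intro p q n f hN hp hq; omega
  | succ N IH =>
    intro p q n f hN hp hq hn h1 h2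
    rcases lt_trichotomy p q with hlt | heq | hgt
    · have hr : 0 < q - p := by omega
      have hgcd : Nat.gcd p (q - p) = Nat.gcd p q := by
        conv_rhs => rw [show q = q - p + p by omega]
        rw [Nat.gcd_add_self_right]
      have hgp : Nat.gcd p q ∣ p := Nat.gcd_dvd_left _ _
      have hgq : Nat.gcd p q ∣ q := Nat.gcd_dvd_right _ _
      have hgpos : 0 < Nat.gcd p q := Nat.gcd_pos_of_pos_left _ hp
      have hgler : Nat.gcd p q ≤ q - p := Nat.le_of_dvd hr (Nat.dvd_sub hgq hgp)
      have h1' : HasPer f (n - p) p := fun j hj => h1 j (by omega)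
      have h2' : HasPer f (n - p) (q - p) := by
        intro j hj
        have e1 : j + (q - p) + p = j + q := by omega
        have ha := h1 (j + (q - p)) (by omega)
        rw [e1] at ha
        exact ha.symm.trans (h2 j (by omega))
      have A := IH p (q - p) (n - p) f (by omega) hp hr (by rw [hgcd]; omega) h1' h2'
      simp only [hgcd] at A
      intro j
      induction j using Nat.strong_induction_on with
      | _ j IHj =>
        intro hj
        rcases lt_or_ge j (n - p) with h' | h'
        · exact A j h'
        · have e : j - p + p = j := by omega
          have h1j := h1 (j - p) (by omega)
          rw [e] at h1j
          rw [h1j, IHj (j - p) (by omega) (by omega)]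
          congr 1
          conv_rhs => rw [← e]
          rw [mod_add_right_of_dvd _ _ _ hgp]
    · subst heq
      intro j hj
      rw [Nat.gcd_self]
      exact per_mod hp h1 j hj
    · have hr : 0 < p - q := by omega
      have hgcd : Nat.gcd (p - q) q = Nat.gcd p q := by
        conv_rhs => rw [show p = p - q + q by omega]
        rw [Nat.gcd_add_self_left]
      have hgp : Nat.gcd p q ∣ p := Nat.gcd_dvd_left _ _
      have hgq : Nat.gcd p q ∣ q := Nat.gcd_dvd_right _ _
      have hgpos : 0 < Nat.gcd p q := Nat.gcd_pos_of_pos_left _ hp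
      have hgler : Nat.gcd p q ≤ p - q := Nat.le_of_dvd hr (Nat.dvd_sub hgp hgq)
      have h2' : HasPer f (n - q) q := fun j hj => h2 j (by omega)
      have h1' : HasPer f (n - q) (p - q) := by
        intro j hj
        have e1 : j + (p - q) + q = j + p := by omega
        have ha := h2 (j + (p - q)) (by omega)
        rw [e1] at ha
        exact ha.symm.trans (h1 j (by omega))
      have A := IH (p - q) q (n - q) f (by omega) hr hq (by rw [hgcd]; omega) h1' h2'
      simp only [hgcd] at A
      intro j
      induction j using Nat.strong_induction_on with
      | _ j IHj =>
        intro hj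
        rcases lt_or_ge j (n - q) with h' | h'
        · exact A j h'
        · have e : j - q + q = j := by omega
          have h2j := h2 (j - q) (by omega)
          rw [e] at h2j
          rw [h2j, IHj (j - q) (by omega) (by omega)]
          congr 1
          conv_rhs => rw [← e]
          rw [mod_add_right_of_dvd _ _ _ hgq]

end FW


lemma periodAux {v u : List Bool} {k : ℕ} (hd : v.drop k = u) (ht : v.take u.length = u) :
    ∀ j, j + k < v.length → v.getD (j + k) true = v.getD j true := by
  subst hd
  intro j hj
  have hlen : (v.drop k).length = v.length - k := by simp
  have hj1 : j < (v.drop k).length := by omega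
  simp only [List.getD_eq_getElem?_getD]
  suffices h : v[j + k]? = v[j]? by rw [h]
  have h1 : v[j + k]? = (v.drop k)[j]? := by
    rw [List.getElem?_drop, Nat.add_comm]
  have h2 : (v.drop k)[j]? = v[j]? := by
    conv_lhs => rw [← ht]
    exact List.getElem?_take_of_lt hj1
  rw [h1, h2]

lemma join_replicate_succ (e : ℕ) (l : List Bool) :
    (List.replicate (e+1) l).flatten = l ++ (List.replicate e l).flatten := by
  simp [List.replicate_succ]

lemma join_replicate_length (e : ℕ) (l : List Bool) :
    (List.replicate e l).flatten.length = e * l.length := by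
  induction e with
  | zero => simp
  | succ e ih => rw [join_replicate_succ, List.length_append, ih]; ring

lemma append_join_replicate (e : ℕ) (l : List Bool) :
    l ++ (List.replicate e l).flatten = (List.replicate e l).flatten ++ l := by
  induction e with
  | zero => simp
  | succ e ih =>
    rw [join_replicate_succ, List.append_assoc, ← ih]

lemma join_replicate_singleton (e : ℕ) (x : Bool) :
    (List.replicate e [x]).flatten = List.replicate e x := by
  induction e with
  | zero => simp
  | succ e ih => simp [List.replicate_succ, ih]

inductive Reach : List Bool → List Bool → Prop
  | base1 : Reach [true] [false]
  | base2 : Reach [false] [true]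
  | step (u v : List Bool) (e : ℕ) (he : 1 ≤ e) (h : Reach u v) :
      Reach v ((List.replicate e v).flatten ++ u)

lemma Reach.len {u v : List Bool} (h : Reach u v) : 1 ≤ u.length ∧ 1 ≤ v.length := by
  induction h with
  | base1 => simp
  | base2 => simp
  | step u v e he h ih =>
    refine ⟨ih.2, ?_⟩
    simp only [List.length_append, join_replicate_length]
    omega

lemma Reach.swap {u v : List Bool} (h : Reach u v) :
    ∃ w a b, a ≠ b ∧ u ++ v = w ++ [a, b] ∧ v ++ u = w ++ [b, a] := by
  induction h with
  | base1 => exact ⟨[], true, false, by simp, rfl, rfl⟩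
  | base2 => exact ⟨[], false, true, by simp, rfl, rfl⟩
  | step u v e he h ih =>
    obtain ⟨w, a, b, hab, h1, h2⟩ := ih
    refine ⟨(List.replicate e v).flatten ++ w, b, a, Ne.symm hab, ?_, ?_⟩
    · calc v ++ ((List.replicate e v).flatten ++ u)
          = (v ++ (List.replicate e v).flatten) ++ u := (List.append_assoc _ _ _).symm
        _ = ((List.replicate e v).flatten ++ v) ++ u := by rw [append_join_replicate]
        _ = (List.replicate e v).flatten ++ (v ++ u) := List.append_assoc _ _ _
        _ = (List.replicate e v).flatten ++ (w ++ [b, a]) := by rw [h2]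
        _ = ((List.replicate e v).flatten ++ w) ++ [b, a] := (List.append_assoc _ _ _).symm
    · calc ((List.replicate e v).flatten ++ u) ++ v
          = (List.replicate e v).flatten ++ (u ++ v) := List.append_assoc _ _ _
        _ = (List.replicate e v).flatten ++ (w ++ [a, b]) := by rw [h1]
        _ = ((List.replicate e v).flatten ++ w) ++ [a, b] := (List.append_assoc _ _ _).symm

lemma Reach.coprime {u v : List Bool} (h : Reach u v) : Nat.Coprime u.length v.length := by
  induction h with
  | base1 => simp [Nat.Coprime]
  | base2 => simp [Nat.Coprime]
  | step u v e he h ih =>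
    simp only [List.length_append, join_replicate_length]
    have h2 := (Nat.coprime_add_mul_left_right v.length u.length e).mpr (Nat.Coprime.symm ih)
    rw [show e * v.length + u.length = u.length + v.length * e by ring]
    exact h2

lemma stdSeq_congr (d d' : ℕ → ℕ) : ∀ n, (∀ k, k + 2 ≤ n → d k = d' k) → stdSeq d n = stdSeq d' n := by
  intro n
  induction n using Nat.strong_induction_on with
  | _ n IH =>
    intro hk
    match n with
    | 0 => rfl
    | 1 => rfl
    | (m+2) =>
      show (List.replicate (d m) (stdSeq d (m+1))).flatten ++ stdSeq d m = _
      rw [hk m (le_refl _), IH (m+1) (by omega) (fun k h => hk k (by omega)),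
        IH m (by omega) (fun k h => hk k (by omega))]
      rfl

lemma Reach.std {u v : List Bool} (h : Reach u v) :
    ∃ (d : ℕ → ℕ) (m : ℕ), (∀ n, 1 ≤ n → 1 ≤ d n) ∧ u = stdSeq d m ∧ v = stdSeq d (m+1) := by
  induction h with
  | base1 => exact ⟨fun _ => 1, 0, fun n _ => le_refl 1, rfl, rfl⟩
  | base2 =>
    refine ⟨fun n => if n = 0 then 0 else 1, 1, ?_, rfl, ?_⟩
    · intro n hn; simp [show n ≠ 0 by omega]
    · show [true] = stdSeq _ 2
      simp [stdSeq]
  | step u v e he h ih =>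
    obtain ⟨d, m, hd, hu, hv⟩ := ih
    have e1 : stdSeq (Function.update d m e) (m+1) = stdSeq d (m+1) :=
      stdSeq_congr _ _ _ (fun k hk => Function.update_of_ne (by omega) _ _)
    have e2 : stdSeq (Function.update d m e) m = stdSeq d m :=
      stdSeq_congr _ _ _ (fun k hk => Function.update_of_ne (by omega) _ _)
    refine ⟨Function.update d m e, m + 1, ?_, ?_, ?_⟩
    · intro n hn
      rcases eq_or_ne n m with rfl | hne
      · rw [Function.update_self]; exact he
      · rw [Function.update_of_ne hne]; exact hd n hn
    · rw [e1, ← hv]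
    · show _ = stdSeq _ (m+2)
      simp only [stdSeq]
      rw [Function.update_self, e1, e2, ← hu, ← hv]

lemma Reach.isStd {u v : List Bool} (h : Reach u v) :
    IsStandardWord u ∧ IsStandardWord v := by
  obtain ⟨d, m, hd, hu, hv⟩ := h.std
  exact ⟨⟨d, hd, m, hu⟩, ⟨d, hd, m+1, hv⟩⟩

lemma reach_stdSeq (d : ℕ → ℕ) (hd : ∀ n, 1 ≤ n → 1 ≤ d n) :
    ∀ m, 1 ≤ m → Reach (stdSeq d m) (stdSeq d (m+1)) := by
  intro m
  induction m with
  | zero => intro h; omega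
  | succ m ih =>
    intro _
    rcases Nat.eq_zero_or_pos m with rfl | hm
    · show Reach [false] (stdSeq d 2)
      have h2 : stdSeq d 2 = (List.replicate (d 0) [false]).flatten ++ [true] := by simp [stdSeq]
      rw [h2]
      rcases Nat.eq_zero_or_pos (d 0) with h0 | h0
      · rw [h0]; simpa using Reach.base2
      · exact Reach.step [true] [false] (d 0) h0 Reach.base1
    · show Reach (stdSeq d (m+1)) (stdSeq d (m+2))
      have h2 : stdSeq d (m+2) = (List.replicate (d m) (stdSeq d (m+1))).flatten ++ stdSeq d m := by
        simp [stdSeq]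
      rw [h2]
      exact Reach.step _ _ (d m) (hd m hm) (ih hm)

lemma decomp (w : List Bool) (hw : IsStandardWord w) (h2 : 2 ≤ w.length) :
    ∃ P₁ P₂, (Reach P₁ P₂ ∨ Reach P₂ P₁) ∧ w = P₁ ++ P₂ := by
  obtain ⟨d, hd, m, rfl⟩ := hw
  rcases m with _ | _ | m
  · simp [stdSeq] at h2
  · simp [stdSeq] at h2
  · have hAB : Reach (stdSeq d m) (stdSeq d (m+1)) := by
      rcases Nat.eq_zero_or_pos m with rfl | hm
      · exact Reach.base1
      · exact reach_stdSeq d hd m hm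
    have he : 1 ≤ d m := by
      rcases Nat.eq_zero_or_pos (d m) with h0 | h0
      · rcases Nat.eq_zero_or_pos m with rfl | hm
        · exfalso; simp [stdSeq, h0] at h2
        · exact absurd h0 (by have := hd m hm; omega)
      · exact h0
    rcases Nat.lt_or_ge (d m) 2 with h1 | h1
    · have e1 : d m = 1 := by omega
      refine ⟨stdSeq d (m+1), stdSeq d m, Or.inr hAB, ?_⟩
      show stdSeq d (m+2) = _
      simp [stdSeq, e1]
    · refine ⟨stdSeq d (m+1), (List.replicate (d m - 1) (stdSeq d (m+1))).flatten ++ stdSeq d m,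
        Or.inl (Reach.step _ _ (d m - 1) (by omega) hAB), ?_⟩
      show stdSeq d (m+2) = _
      simp only [stdSeq]
      rw [← List.append_assoc]
      congr 1
      conv_lhs => rw [show d m = (d m - 1) + 1 by omega]
      rw [join_replicate_succ]

lemma Reach.sing {u w : List Bool} (h : Reach u w) (hone : u.length = 1 ∨ w.length = 1) :
    ∃ (c : Bool) (k : ℕ), (u = [c] ∧ w = List.replicate k c ++ [!c]) ∨ (w = [c] ∧ u = [!c]) := by
  induction h with
  | base1 => exact ⟨true, 0, Or.inl ⟨rfl, by simp⟩⟩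
  | base2 => exact ⟨false, 0, Or.inl ⟨rfl, by simp⟩⟩
  | step u v e he h ih =>
    have hv1 : v.length = 1 := by
      rcases hone with h1 | h1
      · exact h1
      · exfalso
        simp only [List.length_append, join_replicate_length] at h1
        have hl := h.len
        have : 1 * 1 ≤ e * v.length := Nat.mul_le_mul he hl.2
        omega
    obtain ⟨c, k, hck⟩ := ih (Or.inr hv1)
    rcases hck with ⟨hu0, hvr⟩ | ⟨hv0, hu0⟩
    · have hk : k = 0 := by
        rw [hvr] at hv1; simp at hv1; omega
      subst hk
      simp only [List.replicate_zero, List.nil_append] at hvr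
      refine ⟨!c, e, Or.inl ⟨hvr, ?_⟩⟩
      rw [hvr, hu0, join_replicate_singleton]
      simp
    · refine ⟨c, e, Or.inl ⟨hv0, ?_⟩⟩
      rw [hv0, hu0, join_replicate_singleton]

lemma closed_replicate (n : ℕ) (c : Bool) : ClosedWord (List.replicate n c) := by
  rcases n with _ | k
  · exact Or.inl rfl
  · refine Or.inr ⟨List.replicate k c, ⟨?_, ?_, ?_⟩, ?_⟩
    · exact ⟨[c], (List.replicate_succ' ..).symm⟩
    · exact ⟨[c], (List.replicate_succ ..).symm⟩
    · intro hEq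
      have := congrArg List.length hEq
      simp at this
    · rintro ⟨p, s, hp, hs, hEq⟩
      have hL := congrArg List.length hEq
      simp at hL
      have hp' : 0 < p.length := List.length_pos_iff.mpr hp
      have hs' : 0 < s.length := List.length_pos_iff.mpr hs
      omega

lemma closed_of_CR (v t : List Bool) (h : CompleteReturnTo v t) : ClosedWord v := by
  obtain ⟨hpre, hsuf, hne, hocc⟩ := h
  right
  refine ⟨t, ⟨hpre, hsuf, hne⟩, ?_⟩
  rintro ⟨P, S, hP, hS, hvps⟩
  have hL := congrArg List.length hvps
  simp at hL
  have hP' : 0 < P.length := List.length_pos_iff.mpr hP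
  have hS' : 0 < S.length := List.length_pos_iff.mpr hS
  have hoc : OccurrenceAt t v P.length := by
    constructor
    · omega
    · rw [hvps, List.append_assoc, List.drop_left]
      exact List.prefix_append _ _
  rcases hocc P.length hoc with h0 | h0
  · omega
  · omega

lemma crCore (v t r : List Bool) (s : ℕ) (hs : 1 ≤ s)
    (hlen : v.length = t.length + s)
    (ht1 : v.take t.length = t) (hd1 : v.drop s = t)
    (ht2 : v.take r.length = r) (hd2 : v.drop (t.length + 2) = r)
    (hcop : Nat.Coprime s (t.length + 2))
    (hts : s ≤ t.length + 1)
    (hnc : ¬ ∃ (c : Bool) (n : ℕ), v = List.replicate n c) :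
    CompleteReturnTo v t := by
  set f : ℕ → Bool := fun j => v.getD j true with hf
  have hper_s : ∀ j, j + s < v.length → f (j + s) = f j := periodAux hd1 ht1
  have hper_pi : ∀ j, j + (t.length + 2) < v.length → f (j + (t.length + 2)) = f j :=
    periodAux hd2 ht2
  refine ⟨?_, ?_, ?_, ?_⟩
  · rw [← ht1]; exact List.take_prefix _ _
  · rw [← hd1]; exact List.drop_suffix _ _
  · intro he; rw [← he] at hlen; omega
  · intro i hocc
    obtain ⟨hile, hpre⟩ := hocc
    by_contra hcon
    push_neg at hcon
    obtain ⟨hi0, his⟩ := hcon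
    have hi1 : 1 ≤ i := by omega
    have hilt : i < s := by omega
    have hocc_pt : ∀ j, j < t.length → f (j + i) = f j := by
      intro j hj
      have hjv : j + i < v.length := by omega
      have hjv2 : j < v.length := by omega
      show v.getD (j + i) true = v.getD j true
      simp only [List.getD_eq_getElem?_getD]
      suffices h : v[j + i]? = v[j]? by rw [h]
      have h1 : v[j + i]? = (v.drop i)[j]? := by
        rw [List.getElem?_drop, Nat.add_comm]
      have h2 : (v.drop i)[j]? = t[j]? := by
        obtain ⟨tail, htl⟩ := hpre
        rw [← htl]
        have hjt : j < t.length := hj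
        rw [List.getElem?_append_left hjt]
      have h3 : t[j]? = v[j]? := by
        conv_lhs => rw [← ht1]
        exact List.getElem?_take_of_lt hj
      rw [h1, h2, h3]
    have hP1 : HasPer f (t.length + i) i := by
      intro j hj
      exact hocc_pt j (by omega)
    have hP2 : HasPer f (t.length + i) s := by
      intro j hj
      exact hper_s j (by omega)
    set g := Nat.gcd i s with hg
    have hgpos : 0 < g := Nat.gcd_pos_of_pos_left _ hi1
    have hgi : g ≤ i := Nat.le_of_dvd hi1 (Nat.gcd_dvd_left _ _)
    have hgs : g ∣ s := Nat.gcd_dvd_right _ _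
    have A1 := fw (i + s) i s (t.length + i) f (le_refl _) hi1 (by omega) (by omega) hP1 hP2
    have A2 : ∀ j, j < v.length → f j = f (j % g) := by
      intro j
      induction j using Nat.strong_induction_on with
      | _ j IHj =>
        intro hj
        rcases lt_or_ge j (t.length + i) with h' | h'
        · exact A1 j h'
        · have e : j - s + s = j := by omega
          have h1j := hper_s (j - s) (by omega)
          rw [e] at h1j
          calc f j = f (j - s) := h1j
            _ = f ((j - s) % g) := IHj (j - s) (by omega) (by omega)
            _ = f (j % g) := by
                congr 1
                conv_rhs => rw [← e]
                rw [mod_add_right_of_dvd _ _ _ hgs]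
    have hPg : HasPer f v.length g := by
      intro j hj
      rw [A2 (j + g) hj, A2 j (by omega)]
      congr 1
      exact mod_add_right_of_dvd j g g dvd_rfl
    have hPpi : HasPer f v.length (t.length + 2) := fun j hj => hper_pi j hj
    have hcop2 : Nat.Coprime g (t.length + 2) := Nat.Coprime.coprime_dvd_left hgs hcop
    have hone := hcop2.gcd_eq_one
    have A3 := fw (g + (t.length + 2)) g (t.length + 2) v.length f (le_refl _) hgpos (by omega)
      (by rw [hone]; omega) hPg hPpi
    apply hnc
    refine ⟨f 0, v.length, ?_⟩
    rw [List.eq_replicate_iff]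
    refine ⟨rfl, ?_⟩
    intro x hx
    obtain ⟨j, hj, rfl⟩ := List.mem_iff_getElem.mp hx
    have := A3 j hj
    rw [hone, Nat.mod_one] at this
    calc v[j] = v.getD j true := (List.getD_eq_getElem _ _ hj).symm
      _ = f j := rfl
      _ = f 0 := this

lemma pow_of_sing (P₁ P₂ v : List Bool) (a b : Bool)
    (hgood : Reach P₁ P₂ ∨ Reach P₂ P₁) (hone : P₁.length = 1)
    (e₁ : P₁ ++ P₂ = v ++ [a, b]) : ∃ (c : Bool) (n : ℕ), v = List.replicate n c := by
  have hvlen : v.length + 2 = P₁.length + P₂.length := by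
    have := congrArg List.length e₁
    simp at this
    omega
  rcases hgood with hg | hg
  · obtain ⟨c, k, hck⟩ := hg.sing (Or.inl hone)
    rcases hck with ⟨h1, h2⟩ | ⟨h1, h2⟩
    · refine ⟨c, k, ?_⟩
      have hvk : v.length = k := by
        have := congrArg List.length h2
        simp at this
        omega
      have hEq : v ++ [a, b] = List.replicate k c ++ [c, !c] := by
        rw [← e₁, h1, h2]
        have hh : [c] ++ List.replicate k c = List.replicate k c ++ [c] := by
          rw [List.singleton_append, ← List.replicate_succ, List.replicate_succ']
        calc [c] ++ (List.replicate k c ++ [!c])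
            = ([c] ++ List.replicate k c) ++ [!c] := (List.append_assoc _ _ _).symm
          _ = (List.replicate k c ++ [c]) ++ [!c] := by rw [hh]
          _ = List.replicate k c ++ [c, !c] := by simp
      calc v = (v ++ [a, b]).take v.length := List.take_left.symm
        _ = (List.replicate k c ++ [c, !c]).take v.length := by rw [hEq]
        _ = List.replicate k c := by rw [hvk]; exact List.take_left' (by simp)
    · have hlen0 : v.length = 0 := by
        have l1 : P₁.length = 1 := hone
        have l2 : P₂.length = 1 := by rw [h1]; rfl
        omega
      exact ⟨true, 0, by rw [List.eq_nil_of_length_eq_zero hlen0]; rfl⟩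
  · obtain ⟨c, k, hck⟩ := hg.sing (Or.inr hone)
    rcases hck with ⟨h1, h2⟩ | ⟨h1, h2⟩
    · have hk : k = 0 := by
        have := congrArg List.length h2
        simp at this
        omega
      subst hk
      have hlen0 : v.length = 0 := by
        have l2 : P₂.length = 1 := by rw [h1]; rfl
        omega
      exact ⟨true, 0, by rw [List.eq_nil_of_length_eq_zero hlen0]; rfl⟩
    · have hlen0 : v.length = 0 := by
        have l2 : P₂.length = 1 := by rw [h2]; rfl
        omega
      exact ⟨true, 0, by rw [List.eq_nil_of_length_eq_zero hlen0]; rfl⟩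

lemma mainDecomp (P₁ P₂ v : List Bool) (a b : Bool) (hab : a ≠ b)
    (h₁ : 2 ≤ P₁.length) (hlt : P₁.length < P₂.length)
    (hcop : Nat.Coprime P₁.length P₂.length)
    (hs₁ : IsStandardWord P₁) (hs₂ : IsStandardWord P₂)
    (e₁ : P₁ ++ P₂ = v ++ [a, b]) (e₂ : P₂ ++ P₁ = v ++ [b, a])
    (hnp : ¬ ∃ (c : Bool) (n : ℕ), v = List.replicate n c) :
    ∃ (p q : List Bool) (x y : Bool), IsCentral p ∧ IsCentral q ∧ x ≠ y ∧
      v = p ++ [x, y] ++ q ∧ v = q ++ [y, x] ++ p ∧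
      CompleteReturnTo v (if p.length ≤ q.length then q else p) := by
  have hvlen : v.length + 2 = P₁.length + P₂.length := by
    have := congrArg List.length e₁
    simp at this
    omega
  set p := v.drop P₂.length with hp
  set q := v.drop P₁.length with hq
  have hP2v : P₂.length ≤ v.length := by omega
  have hP1v : P₁.length ≤ v.length := by omega
  have hP₁ : P₁ = p ++ [b, a] := by
    have h := congrArg (List.drop P₂.length) e₂
    rw [List.drop_left] at h
    rw [h, List.drop_append_of_le_length hP2v]
  have hP₂ : P₂ = q ++ [a, b] := by
    have h := congrArg (List.drop P₁.length) e₁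
    rw [List.drop_left] at h
    rw [h, List.drop_append_of_le_length hP1v]
  have hplen : p.length + 2 = P₁.length := by
    have := congrArg List.length hP₁
    simp at this
    omega
  have hqlen : q.length + 2 = P₂.length := by
    have := congrArg List.length hP₂
    simp at this
    omega
  have hv1 : v = p ++ [b, a] ++ q := by
    have h : v ++ [a, b] = (p ++ [b, a] ++ q) ++ [a, b] := by
      rw [← e₁, hP₁, hP₂]
      simp [List.append_assoc]
    exact List.append_cancel_right h
  have hv2 : v = q ++ [a, b] ++ p := by
    have h : v ++ [b, a] = (q ++ [a, b] ++ p) ++ [b, a] := by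
      rw [← e₂, hP₁, hP₂]
      simp [List.append_assoc]
    exact List.append_cancel_right h
  refine ⟨p, q, b, a, ⟨b, a, Ne.symm hab, by rw [← hP₁]; exact hs₁⟩,
    ⟨a, b, hab, by rw [← hP₂]; exact hs₂⟩, Ne.symm hab, hv1, hv2, ?_⟩
  have hpq : p.length ≤ q.length := by omega
  rw [if_pos hpq]
  refine crCore v q p P₁.length (by omega) (by omega) ?_ ?_ ?_ ?_ ?_ (by omega) hnp
  · rw [hv2, List.append_assoc, List.take_left]
  · exact hq.symm
  · rw [hv1, List.append_assoc, List.take_left]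
  · rw [show q.length + 2 = P₂.length by omega]
  · rw [show q.length + 2 = P₂.length by omega]
    exact hcop


theorem stmt15 (v : List Bool) (h : IsCentral v) :
    ClosedWord v ∧
      ((¬ ∃ (x : Bool) (n : ℕ), v = List.replicate n x) →
        ∃ (p q : List Bool) (x y : Bool), IsCentral p ∧ IsCentral q ∧ x ≠ y ∧
          v = p ++ [x, y] ++ q ∧ v = q ++ [y, x] ++ p ∧
          CompleteReturnTo v (if p.length ≤ q.length then q else p)) := by
  obtain ⟨x₀, y₀, hxy, hstd⟩ := h
  have hw2 : 2 ≤ (v ++ [x₀, y₀]).length := by simp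
  obtain ⟨P₁, P₂, hgood, hw⟩ := decomp _ hstd hw2
  obtain ⟨w₀, a, b, hab, hab1, hab2⟩ :
      ∃ w₀ a b, a ≠ b ∧ P₁ ++ P₂ = w₀ ++ [a, b] ∧ P₂ ++ P₁ = w₀ ++ [b, a] := by
    rcases hgood with hg | hg
    · exact hg.swap
    · obtain ⟨w₀, a, b, hab, h1, h2⟩ := hg.swap
      exact ⟨w₀, b, a, Ne.symm hab, h2, h1⟩
  have hvw : v = w₀ := by
    have h0 : v ++ [x₀, y₀] = w₀ ++ [a, b] := by rw [hw, hab1]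
    have hl : v.length = w₀.length := by
      have := congrArg List.length h0
      simp at this
      omega
    exact (List.append_inj h0 hl).1
  subst hvw
  have hstd₁ : IsStandardWord P₁ ∧ IsStandardWord P₂ := by
    rcases hgood with hg | hg
    · exact hg.isStd
    · exact ⟨hg.isStd.2, hg.isStd.1⟩
  have hcop : Nat.Coprime P₁.length P₂.length := by
    rcases hgood with hg | hg
    · exact hg.coprime
    · exact hg.coprime.symm
  have hlen1 : 1 ≤ P₁.length ∧ 1 ≤ P₂.length := by
    rcases hgood with hg | hg
    · exact hg.len
    · exact ⟨hg.len.2, hg.len.1⟩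
  by_cases hpow : ∃ (c : Bool) (n : ℕ), v = List.replicate n c
  · obtain ⟨c, n, hv⟩ := hpow
    constructor
    · rw [hv]; exact closed_replicate n c
    · intro h'; exact absurd ⟨c, n, hv⟩ h'
  · have h₁ : 2 ≤ P₁.length := by
      rcases Nat.lt_or_ge P₁.length 2 with h' | h'
      · exact absurd (pow_of_sing P₁ P₂ v a b hgood (by omega) hab1) hpow
      · exact h'
    have h₂ : 2 ≤ P₂.length := by
      rcases Nat.lt_or_ge P₂.length 2 with h' | h'
      · exact absurd (pow_of_sing P₂ P₁ v b a hgood.symm (by omega) hab2) hpow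
      · exact h'
    have hne : P₁.length ≠ P₂.length := by
      intro hEq
      rw [hEq] at hcop
      have := hcop.gcd_eq_one
      rw [Nat.gcd_self] at this
      omega
    rcases Nat.lt_or_ge P₁.length P₂.length with hlt | hge
    · obtain ⟨p, q, x, y, hcp, hcq, hxy', hv1, hv2, hCR⟩ :=
        mainDecomp P₁ P₂ v a b hab h₁ hlt hcop hstd₁.1 hstd₁.2 hab1 hab2 hpow
      exact ⟨closed_of_CR v _ hCR, fun _ => ⟨p, q, x, y, hcp, hcq, hxy', hv1, hv2, hCR⟩⟩
    · have hlt : P₂.length < P₁.length := by omega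
      obtain ⟨p, q, x, y, hcp, hcq, hxy', hv1, hv2, hCR⟩ :=
        mainDecomp P₂ P₁ v b a (Ne.symm hab) h₂ hlt hcop.symm hstd₁.2 hstd₁.1 hab2 hab1 hpow
      exact ⟨closed_of_CR v _ hCR, fun _ => ⟨p, q, x, y, hcp, hcq, hxy', hv1, hv2, hCR⟩⟩
end
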